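/- Let ℓ ≥ 1, k ≥ 0, 1 ≤ p ≤ ℓ, and let μ = (c_1, ..., c_n) be integers with ℓ ≥ c_1 ≥ c_2 ≥ ... ≥ c_n ≥ 0 and Σ_{i=1}^n c_i = 2(kℓ + p). Set Λ = Σ_{i=2k+2}^n c_i (with Λ = 0 if 2k+2 > n). If Λ > p and μ is ℓ-maximal (at least n−3 of the amounts c_i equal ℓ), then there exists exactly one semistandard Young tableau of shape ϱ = (ℓ^{2k}, p, p) with content μ, and this unique tableau is proper. -/

import Mathlib

set_option maxHeartbeats 1600000


/-- `IsSSYT R C r n c T` : the filling `T` (entry `T a b` in row `a`, column `b`,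
both 1-indexed) is a semistandard Young tableau of the shape whose `a`-th row
(for `1 ≤ a ≤ R`) consists of the boxes `(a, b)` with `1 ≤ b ≤ r a` (where
`r a ≤ C`), with entries in `{1, ..., n}`, rows weakly increasing, columns
strictly increasing, and using exactly `c i` entries equal to `i` for each
`1 ≤ i ≤ n`. -/
def IsSSYT (R C : ℕ) (r : ℕ → ℕ) (n : ℕ) (c : ℕ → ℕ) (T : ℕ → ℕ → ℕ) : Prop :=
  (∀ a ∈ Finset.Icc 1 R, ∀ b ∈ Finset.Icc 1 (r a), 1 ≤ T a b ∧ T a b ≤ n) ∧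
  (∀ a ∈ Finset.Icc 1 R, ∀ b b' : ℕ, 1 ≤ b → b ≤ b' → b' ≤ r a → T a b ≤ T a b') ∧
  (∀ a : ℕ, 1 ≤ a → a + 1 ≤ R → ∀ b : ℕ, 1 ≤ b → b ≤ r a → b ≤ r (a + 1) →
    T a b < T (a + 1) b) ∧
  (∀ i : ℕ, 1 ≤ i → i ≤ n →
    ((Finset.Icc 1 R ×ˢ Finset.Icc 1 C).filter
      (fun q => q.2 ≤ r q.1 ∧ T q.1 q.2 = i)).card = c i)

/-- Row lengths of the shape `ϱ = (ℓ^{2k}, p, p)`: rows `1, ..., 2k` have length `ℓ`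
and rows `2k+1`, `2k+2` have length `p`. -/
def rhoRow (l k p : ℕ) (a : ℕ) : ℕ := if a ≤ 2 * k then l else p

/-- A semistandard Young tableau of shape `ϱ = (ℓ^{2k}, p, p)` with content
`(c 1, ..., c n)`. -/
def IsRhoSSYT (l k p n : ℕ) (c : ℕ → ℕ) (T : ℕ → ℕ → ℕ) : Prop :=
  IsSSYT (2 * k + 2) l (rhoRow l k p) n c T

/-- A tableau of shape `ϱ = (ℓ^{2k}, p, p)` is proper if `T (q+2) 1 ≥ T q ℓ`
for all `1 ≤ q ≤ 2k`. -/
def IsProper (l k : ℕ) (T : ℕ → ℕ → ℕ) : Prop :=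
  ∀ q : ℕ, 1 ≤ q → q ≤ 2 * k → T q l ≤ T (q + 2) 1

/-- Two fillings agree on every box of the shape with row lengths `r` and `R` rows. -/
def EqOnShape (R : ℕ) (r : ℕ → ℕ) (T T' : ℕ → ℕ → ℕ) : Prop :=
  ∀ a ∈ Finset.Icc 1 R, ∀ b ∈ Finset.Icc 1 (r a), T a b = T' a b

/-- The content `(c 1, ..., c n)` is `ℓ`-maximal if at least `n - 3` of the
amounts `c i` equal `ℓ`. -/
def IsMaximal (l n : ℕ) (c : ℕ → ℕ) : Prop :=
  n - 3 ≤ ((Finset.Icc 1 n).filter (fun i => c i = l)).card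

/-- A filling is normalized if it vanishes outside the boxes of the shape. -/
def Normalized (R : ℕ) (r : ℕ → ℕ) (T : ℕ → ℕ → ℕ) : Prop :=
  ∀ a b : ℕ, ¬ (1 ≤ a ∧ a ≤ R ∧ 1 ≤ b ∧ b ≤ r a) → T a b = 0

namespace Stmt3Aux
open Finset

lemma card_filter_product (s t : Finset ℕ) (P : ℕ × ℕ → Prop) [DecidablePred P] :
    ((s ×ˢ t).filter P).card = ∑ a ∈ s, ((t.filter fun b => P (a, b)).card) := by
  have h : ∀ {α : Type} (u : Finset α) (Q : α → Prop) (_ : DecidablePred Q),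
      (u.filter Q).card = ∑ a ∈ u, if Q a then 1 else 0 := by
    intro α u Q _
    simpa using (Finset.natCast_card_filter (α := ℕ) Q u)
  rw [h _ _ inferInstance, Finset.sum_product]
  exact Finset.sum_congr rfl fun a _ => (h _ _ inferInstance).symm

lemma sum_split (N j : ℕ) (hj : j ≤ N) (f : ℕ → ℕ) :
    ∑ q ∈ Finset.Icc 1 N, f q
      = (∑ q ∈ Finset.Icc 1 j, f q) + ∑ q ∈ Finset.Icc (j + 1) N, f q := by
  have h0 : Finset.Icc 1 N = Finset.Ioc 0 N := by rw [← Finset.Icc_add_one_left_eq_Ioc]; rfl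
  have h1 : Finset.Icc 1 j = Finset.Ioc 0 j := by rw [← Finset.Icc_add_one_left_eq_Ioc]; rfl
  have h2 : Finset.Icc (j + 1) N = Finset.Ioc j N := by rw [← Finset.Icc_add_one_left_eq_Ioc]
  rw [h0, h1, h2, Finset.sum_Ioc_consecutive _ (Nat.zero_le j) hj]

lemma downset (L t : ℕ) (S : Finset ℕ) (hS : S ⊆ Finset.Icc 1 L)
    (hdown : ∀ i j : ℕ, 1 ≤ i → i ≤ j → j ∈ S → i ∈ S) (hcard : S.card = t) :
    S = Finset.Icc 1 t := by
  have htL : t ≤ L := by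
    have := Finset.card_le_card hS
    rw [hcard, Nat.card_Icc] at this
    omega
  have hsub : Finset.Icc 1 t ⊆ S := by
    intro j hj
    rw [Finset.mem_Icc] at hj
    by_contra hjS
    have hSsub : S ⊆ Finset.Icc 1 (j - 1) := by
      intro i hi
      have hi' := hS hi
      rw [Finset.mem_Icc] at hi' ⊢
      refine ⟨hi'.1, ?_⟩
      by_contra hij
      exact hjS (hdown j i hj.1 (by omega) hi)
    have := Finset.card_le_card hSsub
    rw [hcard, Nat.card_Icc] at this
    omega
  exact (Finset.eq_of_subset_of_card_le hsub (by rw [hcard, Nat.card_Icc]; omega)).symm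

lemma two_val (L t x y : ℕ) (hxy : x < y) (f : ℕ → ℕ)
    (hmono : ∀ i j : ℕ, 1 ≤ i → i ≤ j → j ≤ L → f i ≤ f j)
    (hvals : ∀ j : ℕ, 1 ≤ j → j ≤ L → f j = x ∨ f j = y)
    (hcard : ((Finset.Icc 1 L).filter (fun j => f j = x)).card = t) :
    ∀ j : ℕ, 1 ≤ j → j ≤ L → f j = if j ≤ t then x else y := by
  have hset : (Finset.Icc 1 L).filter (fun j => f j = x) = Finset.Icc 1 t := by
    refine downset L t _ (Finset.filter_subset _ _) ?_ hcard
    intro i j h1 hij hj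
    rw [Finset.mem_filter, Finset.mem_Icc] at hj
    rw [Finset.mem_filter, Finset.mem_Icc]
    refine ⟨⟨h1, le_trans hij hj.1.2⟩, ?_⟩
    have h2 := hmono i j h1 hij hj.1.2
    rcases hvals i h1 (le_trans hij hj.1.2) with h | h
    · exact h
    · omega
  have htL : t ≤ L := by
    have := Finset.card_le_card (Finset.filter_subset (fun j => f j = x) (Finset.Icc 1 L))
    rw [hcard, Nat.card_Icc] at this
    omega
  intro j h1 h2
  by_cases hjt : j ≤ t
  · have : j ∈ (Finset.Icc 1 L).filter (fun j => f j = x) := by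
      rw [hset, Finset.mem_Icc]; exact ⟨h1, hjt⟩
    rw [Finset.mem_filter] at this
    rw [if_pos hjt]; exact this.2
  · rw [if_neg hjt]
    have : j ∉ (Finset.Icc 1 L).filter (fun j => f j = x) := by
      rw [hset, Finset.mem_Icc]; omega
    rw [Finset.mem_filter, Finset.mem_Icc] at this
    rcases hvals j h1 h2 with h | h
    · exact absurd ⟨⟨h1, h2⟩, h⟩ this
    · exact h

lemma three_val (L A D x y z : ℕ) (hxy : x < y) (hyz : y < z) (f : ℕ → ℕ)
    (hmono : ∀ i j : ℕ, 1 ≤ i → i ≤ j → j ≤ L → f i ≤ f j)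
    (hvals : ∀ j : ℕ, 1 ≤ j → j ≤ L → f j = x ∨ f j = y ∨ f j = z)
    (hA : ((Finset.Icc 1 L).filter (fun j => f j = x)).card = A)
    (hD : ((Finset.Icc 1 L).filter (fun j => f j = z)).card = D) :
    ∀ j : ℕ, 1 ≤ j → j ≤ L → f j = if j ≤ A then x else if j ≤ L - D then y else z := by
  have hg : ∀ j : ℕ, 1 ≤ j → j ≤ L → min (f j) y = if j ≤ A then x else y := by
    refine two_val L A x y hxy _ ?_ ?_ ?_
    · intro i j h1 h2 h3
      exact min_le_min (hmono i j h1 h2 h3) le_rfl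
    · intro j h1 h2
      rcases hvals j h1 h2 with h | h | h
      · exact Or.inl (by rw [h]; exact min_eq_left hxy.le)
      · exact Or.inr (by rw [h]; exact min_self y)
      · exact Or.inr (by rw [h]; exact min_eq_right hyz.le)
    · have hfe : (Finset.Icc 1 L).filter (fun j => min (f j) y = x)
          = (Finset.Icc 1 L).filter (fun j => f j = x) := by
        refine Finset.filter_congr (fun j hj => ?_)
        rw [Finset.mem_Icc] at hj
        constructor
        · intro h
          rcases hvals j hj.1 hj.2 with h' | h' | h'
          · exact h'
          · rw [h', min_self] at h; omega
          · rw [h', min_eq_right hyz.le] at h; omega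
        · intro h; rw [h]; exact min_eq_left hxy.le
      rw [hfe]; exact hA
  have hzcount : ((Finset.Icc 1 L).filter (fun j => max (f j) y = y)).card = L - D := by
    have hpart := Finset.card_filter_add_card_filter_not
      (s := Finset.Icc 1 L) (p := fun j => max (f j) y = y)
    have hneg : (Finset.Icc 1 L).filter (fun j => ¬ (max (f j) y = y))
        = (Finset.Icc 1 L).filter (fun j => f j = z) := by
      refine Finset.filter_congr (fun j hj => ?_)
      rw [Finset.mem_Icc] at hj
      rcases hvals j hj.1 hj.2 with h | h | h
      · rw [h, max_eq_right hxy.le]; simp; omega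
      · rw [h, max_self]; simp; omega
      · rw [h, max_eq_left hyz.le]; simp; omega
    rw [hneg, hD, Nat.card_Icc] at hpart
    omega
  have hh : ∀ j : ℕ, 1 ≤ j → j ≤ L → max (f j) y = if j ≤ L - D then y else z := by
    refine two_val L (L - D) y z hyz _ ?_ ?_ hzcount
    · intro i j h1 h2 h3
      exact max_le_max (hmono i j h1 h2 h3) le_rfl
    · intro j h1 h2
      rcases hvals j h1 h2 with h | h | h
      · exact Or.inl (by rw [h]; exact max_eq_right hxy.le)
      · exact Or.inl (by rw [h]; exact max_self y)
      · exact Or.inr (by rw [h]; exact max_eq_left hyz.le)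
  intro j h1 h2
  have hgj := hg j h1 h2
  have hhj := hh j h1 h2
  split_ifs with h3 h4
  · rw [if_pos h3] at hgj
    rcases hvals j h1 h2 with h | h | h
    · exact h
    · rw [h, min_self] at hgj; omega
    · rw [h, min_eq_right hyz.le] at hgj; omega
  · rw [if_neg h3] at hgj
    rw [if_pos h4] at hhj
    rcases hvals j h1 h2 with h | h | h
    · rw [h, min_eq_left hxy.le] at hgj; omega
    · exact h
    · rw [h, max_eq_left hyz.le] at hhj; omega
  · rw [if_neg h4] at hhj
    rcases hvals j h1 h2 with h | h | h
    · rw [h, max_eq_right hxy.le] at hhj; omega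
    · rw [h, max_self] at hhj; omega
    · exact h

lemma filter_Icc_eq (L u v : ℕ) (P : ℕ → Prop) [DecidablePred P] (hu : 1 ≤ u) (hv : v ≤ L)
    (h : ∀ b : ℕ, 1 ≤ b → b ≤ L → (P b ↔ (u ≤ b ∧ b ≤ v))) :
    ((Finset.Icc 1 L).filter P).card = v + 1 - u := by
  have he : (Finset.Icc 1 L).filter P = Finset.Icc u v := by
    ext b
    simp only [Finset.mem_filter, Finset.mem_Icc]
    constructor
    · rintro ⟨⟨h1, h2⟩, hP⟩
      exact (h b h1 h2).mp hP
    · rintro ⟨h1, h2⟩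
      have hb1 : 1 ≤ b := le_trans hu h1
      have hb2 : b ≤ L := le_trans h2 hv
      exact ⟨⟨hb1, hb2⟩, (h b hb1 hb2).mpr ⟨h1, h2⟩⟩
  rw [he, Nat.card_Icc]

lemma entry_ge (l k p n : ℕ) (c : ℕ → ℕ) (T : ℕ → ℕ → ℕ) (hpl : p ≤ l)
    (hT : IsRhoSSYT l k p n c T) :
    ∀ a b : ℕ, 1 ≤ a → a ≤ 2 * k + 2 → 1 ≤ b → b ≤ rhoRow l k p a → a ≤ T a b := by
  obtain ⟨hent, hrow, hcol, hcount⟩ := hT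
  intro a
  induction a with
  | zero => intro b h; omega
  | succ a ih =>
    intro b h1 h2 hb1 hb2
    by_cases ha : a = 0
    · subst ha
      have := hent (0 + 1) (Finset.mem_Icc.mpr ⟨by omega, by omega⟩) b (Finset.mem_Icc.mpr ⟨hb1, hb2⟩)
      omega
    · have hra : rhoRow l k p (a + 1) ≤ rhoRow l k p a := by
        unfold rhoRow; split_ifs <;> omega
      have h3 := hcol a (by omega) h2 b hb1 (le_trans hb2 hra) hb2
      have h4 := ih b (by omega) (by omega) hb1 (le_trans hb2 hra)
      omega

lemma forced (l k p n : ℕ) (c : ℕ → ℕ) (T : ℕ → ℕ → ℕ) (hl : 1 ≤ l) (hpl : p ≤ l)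
    (hT : IsRhoSSYT l k p n c T) (m : ℕ) (hm2k : m ≤ 2 * k) (hmn : m ≤ n)
    (hc : ∀ i : ℕ, 1 ≤ i → i ≤ m → c i = l) :
    ∀ a : ℕ, 1 ≤ a → a ≤ m → ∀ b : ℕ, 1 ≤ b → b ≤ l → T a b = a := by
  have hge := entry_ge l k p n c T hpl hT
  obtain ⟨hent, hrow, hcol, hcount⟩ := hT
  intro a
  induction a using Nat.strong_induction_on with
  | _ a ih =>
  intro ha1 ham
  have hra : rhoRow l k p a = l := by unfold rhoRow; rw [if_pos (by omega)]
  have hcnt := hcount a ha1 (by omega)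
  rw [hc a ha1 ham, card_filter_product] at hcnt
  have hzero : ∀ q1 ∈ Finset.Icc 1 (2 * k + 2), q1 ≠ a →
      ((Finset.Icc 1 l).filter fun b => b ≤ rhoRow l k p q1 ∧ T q1 b = a).card = 0 := by
    intro q1 hq1 hne
    rw [Finset.card_eq_zero, Finset.filter_eq_empty_iff]
    intro b hb
    rw [Finset.mem_Icc] at hb hq1
    rintro ⟨hbr, hTeq⟩
    rcases lt_trichotomy q1 a with h | h | h
    · have := ih q1 h hq1.1 (by omega) b hb.1 hb.2
      omega
    · exact hne h
    · have := hge q1 b hq1.1 hq1.2 hb.1 hbr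
      omega
  rw [Finset.sum_eq_single_of_mem a (Finset.mem_Icc.mpr ⟨ha1, by omega⟩) hzero] at hcnt
  have hfull : (Finset.Icc 1 l).filter (fun b => b ≤ rhoRow l k p a ∧ T a b = a)
      = Finset.Icc 1 l := by
    apply Finset.eq_of_subset_of_card_le (Finset.filter_subset _ _)
    rw [hcnt, Nat.card_Icc]
    omega
  intro b hb1 hbl
  have hb : b ∈ (Finset.Icc 1 l).filter (fun b => b ≤ rhoRow l k p a ∧ T a b = a) := by
    rw [hfull, Finset.mem_Icc]; exact ⟨hb1, hbl⟩
  exact (Finset.mem_filter.mp hb).2.2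

def TA (k a s : ℕ) (q1 q2 : ℕ) : ℕ :=
  if q1 ≤ 2 * k then q1
  else if q1 = 2 * k + 1 then (if q2 ≤ a then 2 * k + 1 else 2 * k + 2)
  else (if q2 ≤ s then 2 * k + 2 else 2 * k + 3)

lemma TA_count (l k p a b d i : ℕ) (hpl : p ≤ l) (hba : b ≤ a) (hdb : d ≤ b)
    (hap : a < p) (habd : a + b + d = 2 * p) (q : ℕ) (hq1 : 1 ≤ q) (hq2 : q ≤ 2 * k + 2) :
    ((Finset.Icc 1 l).filter
        (fun b1 => b1 ≤ rhoRow l k p q ∧ TA k a (a + b - p) q b1 = i)).card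
    = if q ≤ 2 * k then (if i = q then l else 0)
      else if q = 2 * k + 1 then
        (if i = 2 * k + 1 then a else if i = 2 * k + 2 then p - a else 0)
      else (if i = 2 * k + 2 then a + b - p
        else if i = 2 * k + 3 then p - (a + b - p) else 0) := by
  have hpab : p ≤ a + b := by omega
  by_cases h1 : q ≤ 2 * k
  · rw [if_pos h1]
    by_cases h2 : i = q
    · rw [if_pos h2]
      rw [filter_Icc_eq l 1 l
        (fun b1 => b1 ≤ rhoRow l k p q ∧ TA k a (a + b - p) q b1 = i) le_rfl le_rfl
        (fun b1 hb1 hb2 => by unfold TA rhoRow; split_ifs <;> omega)]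
      all_goals omega
    · rw [if_neg h2]
      rw [filter_Icc_eq l 2 1
        (fun b1 => b1 ≤ rhoRow l k p q ∧ TA k a (a + b - p) q b1 = i) (by omega) (by omega)
        (fun b1 hb1 hb2 => by unfold TA rhoRow; split_ifs <;> omega)]
      all_goals omega
  · rw [if_neg h1]
    by_cases h2 : q = 2 * k + 1
    · rw [if_pos h2]
      by_cases h3 : i = 2 * k + 1
      · rw [if_pos h3]
        rw [filter_Icc_eq l 1 a
          (fun b1 => b1 ≤ rhoRow l k p q ∧ TA k a (a + b - p) q b1 = i) le_rfl (by omega)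
          (fun b1 hb1 hb2 => by unfold TA rhoRow; split_ifs <;> omega)]
        all_goals omega
      · rw [if_neg h3]
        by_cases h4 : i = 2 * k + 2
        · rw [if_pos h4]
          rw [filter_Icc_eq l (a + 1) p
            (fun b1 => b1 ≤ rhoRow l k p q ∧ TA k a (a + b - p) q b1 = i) (by omega) (by omega)
            (fun b1 hb1 hb2 => by unfold TA rhoRow; split_ifs <;> omega)]
          all_goals omega
        · rw [if_neg h4]
          rw [filter_Icc_eq l 2 1
            (fun b1 => b1 ≤ rhoRow l k p q ∧ TA k a (a + b - p) q b1 = i) (by omega) (by omega)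
            (fun b1 hb1 hb2 => by unfold TA rhoRow; split_ifs <;> omega)]
          all_goals omega
    · rw [if_neg h2]
      by_cases h3 : i = 2 * k + 2
      · rw [if_pos h3]
        rw [filter_Icc_eq l 1 (a + b - p)
          (fun b1 => b1 ≤ rhoRow l k p q ∧ TA k a (a + b - p) q b1 = i) le_rfl (by omega)
          (fun b1 hb1 hb2 => by unfold TA rhoRow; split_ifs <;> omega)]
        all_goals omega
      · rw [if_neg h3]
        by_cases h4 : i = 2 * k + 3
        · rw [if_pos h4]
          rw [filter_Icc_eq l (a + b - p + 1) p
            (fun b1 => b1 ≤ rhoRow l k p q ∧ TA k a (a + b - p) q b1 = i) (by omega) (by omega)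
            (fun b1 hb1 hb2 => by unfold TA rhoRow; split_ifs <;> omega)]
          all_goals omega
        · rw [if_neg h4]
          rw [filter_Icc_eq l 2 1
            (fun b1 => b1 ≤ rhoRow l k p q ∧ TA k a (a + b - p) q b1 = i) (by omega) (by omega)
            (fun b1 hb1 hb2 => by unfold TA rhoRow; split_ifs <;> omega)]
          all_goals omega

lemma existsA (l k p a b d : ℕ) (c : ℕ → ℕ)
    (hl : 1 ≤ l) (hp : 1 ≤ p) (hpl : p ≤ l)
    (hba : b ≤ a) (hdb : d ≤ b) (hap : a < p) (habd : a + b + d = 2 * p)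
    (hc1 : ∀ i : ℕ, 1 ≤ i → i ≤ 2 * k → c i = l)
    (hc2 : c (2 * k + 1) = a) (hc3 : c (2 * k + 2) = b) (hc4 : c (2 * k + 3) = d) :
    ∃ T : ℕ → ℕ → ℕ, IsRhoSSYT l k p (2 * k + 3) c T ∧ IsProper l k T ∧
      ∀ T' : ℕ → ℕ → ℕ, IsRhoSSYT l k p (2 * k + 3) c T' →
        EqOnShape (2 * k + 2) (rhoRow l k p) T' T := by
  have hpab : p ≤ a + b := by omega
  refine ⟨TA k a (a + b - p), ⟨?_, ?_, ?_, ?_⟩, ?_, ?_⟩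
  · -- entry bounds
    intro q1 hq1 q2 hq2
    rw [Finset.mem_Icc] at hq1 hq2
    unfold TA
    split_ifs <;> omega
  · -- rows weakly increasing
    intro q1 hq1 b1 b2 h1 h12 h2r
    rw [Finset.mem_Icc] at hq1
    unfold TA
    split_ifs <;> omega
  · -- columns strictly increasing
    intro q1 h1 h2 b' hb1 hbr hbr'
    unfold TA
    split_ifs <;> omega
  · -- counts
    intro i hi1 hi2
    rw [card_filter_product]
    rw [Finset.sum_congr rfl (fun q hq =>
      TA_count l k p a b d i hpl hba hdb hap habd q
        (Finset.mem_Icc.mp hq).1 (Finset.mem_Icc.mp hq).2)]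
    rw [sum_split (2 * k + 2) (2 * k) (by omega),
      show (2 * k + 2) = (2 * k + 1) + 1 by omega,
      Finset.sum_Icc_succ_top (by omega), Finset.Icc_self, Finset.sum_singleton]
    have hmid : ∑ q ∈ Finset.Icc 1 (2 * k),
        (if q ≤ 2 * k then (if i = q then l else 0)
          else if q = 2 * k + 1 then
            (if i = 2 * k + 1 then a else if i = 2 * k + 2 then p - a else 0)
          else (if i = 2 * k + 2 then a + b - p
            else if i = 2 * k + 3 then p - (a + b - p) else 0))
        = if i ∈ Finset.Icc 1 (2 * k) then l else 0 := by
      refine Eq.trans (Finset.sum_congr rfl (fun q hq => ?_))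
        (Finset.sum_ite_eq (Finset.Icc 1 (2 * k)) i (fun _ => l))
      rw [Finset.mem_Icc] at hq
      rw [if_pos hq.2]
    rw [hmid]
    rw [if_neg (by omega : ¬ (2 * k + 1 ≤ 2 * k)), if_pos rfl,
      if_neg (by omega : ¬ (2 * k + 1 + 1 ≤ 2 * k)),
      if_neg (by omega : ¬ (2 * k + 1 + 1 = 2 * k + 1))]
    have : i ≤ 2 * k ∨ i = 2 * k + 1 ∨ i = 2 * k + 2 ∨ i = 2 * k + 3 := by omega
    rcases this with h | h | h | h
    · rw [hc1 i hi1 h, if_pos (Finset.mem_Icc.mpr ⟨hi1, h⟩)]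
      split_ifs <;> omega
    · subst h
      rw [hc2, if_neg (by rw [Finset.mem_Icc]; omega)]
      split_ifs <;> omega
    · subst h
      rw [hc3, if_neg (by rw [Finset.mem_Icc]; omega)]
      split_ifs <;> omega
    · subst h
      rw [hc4, if_neg (by rw [Finset.mem_Icc]; omega)]
      split_ifs <;> omega
  · -- proper
    intro q hq1 hq2
    unfold TA
    split_ifs <;> omega
  · -- uniqueness
    intro T' hT'
    have hge' := entry_ge l k p (2 * k + 3) c T' hpl hT'
    have hforced := forced l k p (2 * k + 3) c T' hl hpl hT' (2 * k) le_rfl (by omega) hc1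
    obtain ⟨hent, hrowm, hcol, hcount⟩ := hT'
    have hrho21 : rhoRow l k p (2 * k + 1) = p := by unfold rhoRow; rw [if_neg (by omega)]
    have hrho22 : rhoRow l k p (2 * k + 2) = p := by unfold rhoRow; rw [if_neg (by omega)]
    have hub21 : ∀ b1 : ℕ, 1 ≤ b1 → b1 ≤ p →
        T' (2 * k + 1) b1 = 2 * k + 1 ∨ T' (2 * k + 1) b1 = 2 * k + 2 := by
      intro b1 h1 h2
      have hgeq := hge' (2 * k + 1) b1 (by omega) (by omega) h1 (by rw [hrho21]; exact h2)
      have hlt : T' (2 * k + 1) b1 < T' (2 * k + 2) b1 := hcol (2 * k + 1) (by omega)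
        (by omega) b1 h1 (by rw [hrho21]; exact h2) (by rw [hrho22]; exact h2)
      have hub2 := (hent (2 * k + 2) (Finset.mem_Icc.mpr ⟨by omega, le_rfl⟩) b1
        (Finset.mem_Icc.mpr ⟨h1, by rw [hrho22]; exact h2⟩)).2
      omega
    have hub22 : ∀ b1 : ℕ, 1 ≤ b1 → b1 ≤ p →
        T' (2 * k + 2) b1 = 2 * k + 2 ∨ T' (2 * k + 2) b1 = 2 * k + 3 := by
      intro b1 h1 h2
      have hgeq := hge' (2 * k + 2) b1 (by omega) (by omega) h1 (by rw [hrho22]; exact h2)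
      have hub2 := (hent (2 * k + 2) (Finset.mem_Icc.mpr ⟨by omega, le_rfl⟩) b1
        (Finset.mem_Icc.mpr ⟨h1, by rw [hrho22]; exact h2⟩)).2
      omega
    -- count of value 2k+1 sits in row 2k+1
    have hcnt1 := hcount (2 * k + 1) (by omega) (by omega)
    rw [hc2, card_filter_product] at hcnt1
    rw [Finset.sum_eq_single_of_mem (2 * k + 1) (Finset.mem_Icc.mpr ⟨by omega, by omega⟩)
      (fun q hq hne => by
        dsimp only
        rw [Finset.card_eq_zero, Finset.filter_eq_empty_iff]
        intro b1 hb1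
        rw [Finset.mem_Icc] at hb1 hq
        rintro ⟨hbr, hTeq⟩
        rcases Nat.lt_or_ge q (2 * k + 1) with h | h
        · have := hforced q hq.1 (by omega) b1 hb1.1 hb1.2
          omega
        · have hq22 : q = 2 * k + 2 := by omega
          subst hq22
          rw [hrho22] at hbr
          rcases hub22 b1 hb1.1 hbr with h' | h' <;> omega)] at hcnt1
    dsimp only at hcnt1
    have hset1 : (Finset.Icc 1 l).filter
        (fun b1 => b1 ≤ rhoRow l k p (2 * k + 1) ∧ T' (2 * k + 1) b1 = 2 * k + 1)
        = (Finset.Icc 1 p).filter (fun b1 => T' (2 * k + 1) b1 = 2 * k + 1) := by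
      ext b1
      simp only [Finset.mem_filter, Finset.mem_Icc, hrho21]
      constructor
      · rintro ⟨⟨u1, u2⟩, u3, u4⟩
        exact ⟨⟨u1, u3⟩, u4⟩
      · rintro ⟨⟨u1, u2⟩, u4⟩
        exact ⟨⟨u1, le_trans u2 hpl⟩, u2, u4⟩
    rw [hset1] at hcnt1
    have hrow21 : ∀ j : ℕ, 1 ≤ j → j ≤ p →
        T' (2 * k + 1) j = if j ≤ a then 2 * k + 1 else 2 * k + 2 :=
      two_val p a (2 * k + 1) (2 * k + 2) (by omega) _
        (fun i' j h1 h2 h3 => hrowm (2 * k + 1) (Finset.mem_Icc.mpr ⟨by omega, by omega⟩)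
          i' j h1 h2 (by rw [hrho21]; exact h3))
        hub21 hcnt1
    -- count of value 2k+3 sits in row 2k+2
    have hcnt3 := hcount (2 * k + 3) (by omega) (by omega)
    rw [hc4, card_filter_product] at hcnt3
    rw [Finset.sum_eq_single_of_mem (2 * k + 2) (Finset.mem_Icc.mpr ⟨by omega, by omega⟩)
      (fun q hq hne => by
        dsimp only
        rw [Finset.card_eq_zero, Finset.filter_eq_empty_iff]
        intro b1 hb1
        rw [Finset.mem_Icc] at hb1 hq
        rintro ⟨hbr, hTeq⟩
        rcases Nat.lt_or_ge q (2 * k + 1) with h | h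
        · have := hforced q hq.1 (by omega) b1 hb1.1 hb1.2
          omega
        · have hq21 : q = 2 * k + 1 := by omega
          subst hq21
          rw [hrho21] at hbr
          rcases hub21 b1 hb1.1 hbr with h' | h' <;> omega)] at hcnt3
    dsimp only at hcnt3
    have hset3 : (Finset.Icc 1 l).filter
        (fun b1 => b1 ≤ rhoRow l k p (2 * k + 2) ∧ T' (2 * k + 2) b1 = 2 * k + 3)
        = (Finset.Icc 1 p).filter (fun b1 => T' (2 * k + 2) b1 = 2 * k + 3) := by
      ext b1
      simp only [Finset.mem_filter, Finset.mem_Icc, hrho22]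
      constructor
      · rintro ⟨⟨u1, u2⟩, u3, u4⟩
        exact ⟨⟨u1, u3⟩, u4⟩
      · rintro ⟨⟨u1, u2⟩, u4⟩
        exact ⟨⟨u1, le_trans u2 hpl⟩, u2, u4⟩
    rw [hset3] at hcnt3
    have hpart := Finset.card_filter_add_card_filter_not
      (s := Finset.Icc 1 p) (p := fun b1 => T' (2 * k + 2) b1 = 2 * k + 2)
    have hneg : (Finset.Icc 1 p).filter (fun b1 => ¬ T' (2 * k + 2) b1 = 2 * k + 2)
        = (Finset.Icc 1 p).filter (fun b1 => T' (2 * k + 2) b1 = 2 * k + 3) := by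
      refine Finset.filter_congr (fun j hj => ?_)
      rw [Finset.mem_Icc] at hj
      rcases hub22 j hj.1 hj.2 with h | h <;> omega
    rw [hneg, hcnt3, Nat.card_Icc] at hpart
    have hcnt2 : ((Finset.Icc 1 p).filter (fun b1 => T' (2 * k + 2) b1 = 2 * k + 2)).card
        = p - d := by omega
    have hrow22 : ∀ j : ℕ, 1 ≤ j → j ≤ p →
        T' (2 * k + 2) j = if j ≤ p - d then 2 * k + 2 else 2 * k + 3 :=
      two_val p (p - d) (2 * k + 2) (2 * k + 3) (by omega) _
        (fun i' j h1 h2 h3 => hrowm (2 * k + 2) (Finset.mem_Icc.mpr ⟨by omega, by omega⟩)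
          i' j h1 h2 (by rw [hrho22]; exact h3))
        hub22 hcnt2
    -- conclude
    intro a1 ha1 b1 hb1
    rw [Finset.mem_Icc] at ha1 hb1
    rcases Nat.lt_or_ge a1 (2 * k + 1) with h | h
    · have hr : rhoRow l k p a1 = l := by unfold rhoRow; rw [if_pos (by omega)]
      rw [hr] at hb1
      rw [hforced a1 ha1.1 (by omega) b1 hb1.1 hb1.2]
      unfold TA
      split_ifs <;> omega
    · rcases Nat.lt_or_ge a1 (2 * k + 2) with h' | h'
      · have ha21 : a1 = 2 * k + 1 := by omega
        subst ha21
        rw [hrho21] at hb1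
        rw [hrow21 b1 hb1.1 hb1.2]
        unfold TA
        split_ifs <;> omega
      · have ha22 : a1 = 2 * k + 2 := by omega
        subst ha22
        rw [hrho22] at hb1
        rw [hrow22 b1 hb1.1 hb1.2]
        unfold TA
        split_ifs <;> omega

def TB (k a M : ℕ) (q1 q2 : ℕ) : ℕ :=
  if q1 + 1 ≤ 2 * k then q1
  else if q1 = 2 * k then (if q2 ≤ a then 2 * k else if q2 ≤ M then 2 * k + 1 else 2 * k + 2)
  else if q1 = 2 * k + 1 then 2 * k + 1
  else 2 * k + 2

lemma TB_count (l k p a b d i : ℕ) (hl : 1 ≤ l) (hp : 1 ≤ p) (hpl : p ≤ l)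
    (hba : b ≤ a) (hdb : d ≤ b) (hpd : p < d) (hal : a < l)
    (habd : a + b + d = l + 2 * p) (hk : 1 ≤ k)
    (q : ℕ) (hq1 : 1 ≤ q) (hq2 : q ≤ 2 * k + 2) :
    ((Finset.Icc 1 l).filter
        (fun b1 => b1 ≤ rhoRow l k p q ∧ TB k a (a + b - p) q b1 = i)).card
    = if q + 1 ≤ 2 * k then (if i = q then l else 0)
      else if q = 2 * k then
        (if i = 2 * k then a else if i = 2 * k + 1 then b - p
          else if i = 2 * k + 2 then d - p else 0)
      else if q = 2 * k + 1 then (if i = 2 * k + 1 then p else 0)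
      else (if i = 2 * k + 2 then p else 0) := by
  by_cases h1 : q + 1 ≤ 2 * k
  · rw [if_pos h1]
    by_cases h2 : i = q
    · rw [if_pos h2]
      rw [filter_Icc_eq l 1 l
        (fun b1 => b1 ≤ rhoRow l k p q ∧ TB k a (a + b - p) q b1 = i) le_rfl le_rfl
        (fun b1 hb1 hb2 => by unfold TB rhoRow; split_ifs <;> omega)]
      all_goals omega
    · rw [if_neg h2]
      rw [filter_Icc_eq l 2 1
        (fun b1 => b1 ≤ rhoRow l k p q ∧ TB k a (a + b - p) q b1 = i) (by omega) (by omega)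
        (fun b1 hb1 hb2 => by unfold TB rhoRow; split_ifs <;> omega)]
      all_goals omega
  · rw [if_neg h1]
    by_cases h2 : q = 2 * k
    · rw [if_pos h2]
      by_cases h3 : i = 2 * k
      · rw [if_pos h3]
        rw [filter_Icc_eq l 1 a
          (fun b1 => b1 ≤ rhoRow l k p q ∧ TB k a (a + b - p) q b1 = i) le_rfl (by omega)
          (fun b1 hb1 hb2 => by unfold TB rhoRow; split_ifs <;> omega)]
        all_goals omega
      · rw [if_neg h3]
        by_cases h4 : i = 2 * k + 1
        · rw [if_pos h4]
          rw [filter_Icc_eq l (a + 1) (a + b - p)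
            (fun b1 => b1 ≤ rhoRow l k p q ∧ TB k a (a + b - p) q b1 = i) (by omega) (by omega)
            (fun b1 hb1 hb2 => by unfold TB rhoRow; split_ifs <;> omega)]
          all_goals omega
        · rw [if_neg h4]
          by_cases h5 : i = 2 * k + 2
          · rw [if_pos h5]
            rw [filter_Icc_eq l (a + b - p + 1) l
              (fun b1 => b1 ≤ rhoRow l k p q ∧ TB k a (a + b - p) q b1 = i) (by omega) (by omega)
              (fun b1 hb1 hb2 => by unfold TB rhoRow; split_ifs <;> omega)]
            all_goals omega
          · rw [if_neg h5]
            rw [filter_Icc_eq l 2 1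
              (fun b1 => b1 ≤ rhoRow l k p q ∧ TB k a (a + b - p) q b1 = i) (by omega) (by omega)
              (fun b1 hb1 hb2 => by unfold TB rhoRow; split_ifs <;> omega)]
            all_goals omega
    · rw [if_neg h2]
      by_cases h3 : q = 2 * k + 1
      · rw [if_pos h3]
        by_cases h4 : i = 2 * k + 1
        · rw [if_pos h4]
          rw [filter_Icc_eq l 1 p
            (fun b1 => b1 ≤ rhoRow l k p q ∧ TB k a (a + b - p) q b1 = i) le_rfl (by omega)
            (fun b1 hb1 hb2 => by unfold TB rhoRow; split_ifs <;> omega)]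
          all_goals omega
        · rw [if_neg h4]
          rw [filter_Icc_eq l 2 1
            (fun b1 => b1 ≤ rhoRow l k p q ∧ TB k a (a + b - p) q b1 = i) (by omega) (by omega)
            (fun b1 hb1 hb2 => by unfold TB rhoRow; split_ifs <;> omega)]
          all_goals omega
      · rw [if_neg h3]
        by_cases h4 : i = 2 * k + 2
        · rw [if_pos h4]
          rw [filter_Icc_eq l 1 p
            (fun b1 => b1 ≤ rhoRow l k p q ∧ TB k a (a + b - p) q b1 = i) le_rfl (by omega)
            (fun b1 hb1 hb2 => by unfold TB rhoRow; split_ifs <;> omega)]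
          all_goals omega
        · rw [if_neg h4]
          rw [filter_Icc_eq l 2 1
            (fun b1 => b1 ≤ rhoRow l k p q ∧ TB k a (a + b - p) q b1 = i) (by omega) (by omega)
            (fun b1 hb1 hb2 => by unfold TB rhoRow; split_ifs <;> omega)]
          all_goals omega

lemma existsB (l k p a b d : ℕ) (c : ℕ → ℕ)
    (hl : 1 ≤ l) (hp : 1 ≤ p) (hpl : p ≤ l)
    (hba : b ≤ a) (hdb : d ≤ b) (hpd : p < d) (hal : a < l)
    (habd : a + b + d = l + 2 * p) (hk : 1 ≤ k)
    (hc1 : ∀ i : ℕ, 1 ≤ i → i ≤ 2 * k - 1 → c i = l)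
    (hc2 : c (2 * k) = a) (hc3 : c (2 * k + 1) = b) (hc4 : c (2 * k + 2) = d) :
    ∃ T : ℕ → ℕ → ℕ, IsRhoSSYT l k p (2 * k + 2) c T ∧ IsProper l k T ∧
      ∀ T' : ℕ → ℕ → ℕ, IsRhoSSYT l k p (2 * k + 2) c T' →
        EqOnShape (2 * k + 2) (rhoRow l k p) T' T := by
  refine ⟨TB k a (a + b - p), ⟨?_, ?_, ?_, ?_⟩, ?_, ?_⟩
  · -- entry bounds
    intro q1 hq1 q2 hq2
    rw [Finset.mem_Icc] at hq1 hq2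
    unfold TB
    split_ifs <;> omega
  · -- rows weakly increasing
    intro q1 hq1 b1 b2 h1 h12 h2r
    rw [Finset.mem_Icc] at hq1
    unfold TB
    split_ifs <;> omega
  · -- columns strictly increasing
    intro q1 h1 h2 b' hb1 hbr hbr'
    unfold rhoRow at hbr hbr'
    unfold TB
    split_ifs at hbr hbr' ⊢ <;> omega
  · -- counts
    intro i hi1 hi2
    rw [card_filter_product]
    rw [Finset.sum_congr rfl (fun q hq =>
      TB_count l k p a b d i hl hp hpl hba hdb hpd hal habd hk q
        (Finset.mem_Icc.mp hq).1 (Finset.mem_Icc.mp hq).2)]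
    rw [sum_split (2 * k + 2) (2 * k - 1) (by omega),
      show (2 * k - 1) + 1 = 2 * k by omega,
      show (2 * k + 2) = (2 * k + 1) + 1 by omega,
      Finset.sum_Icc_succ_top (show 2 * k ≤ 2 * k + 1 + 1 by omega),
      Finset.sum_Icc_succ_top (show 2 * k ≤ 2 * k + 1 by omega),
      Finset.Icc_self, Finset.sum_singleton]
    have hmid : ∑ q ∈ Finset.Icc 1 (2 * k - 1),
        (if q + 1 ≤ 2 * k then (if i = q then l else 0)
          else if q = 2 * k then
            (if i = 2 * k then a else if i = 2 * k + 1 then b - p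
              else if i = 2 * k + 2 then d - p else 0)
          else if q = 2 * k + 1 then (if i = 2 * k + 1 then p else 0)
          else (if i = 2 * k + 2 then p else 0))
        = if i ∈ Finset.Icc 1 (2 * k - 1) then l else 0 := by
      refine Eq.trans (Finset.sum_congr rfl (fun q hq => ?_))
        (Finset.sum_ite_eq (Finset.Icc 1 (2 * k - 1)) i (fun _ => l))
      rw [Finset.mem_Icc] at hq
      rw [if_pos (by omega : q + 1 ≤ 2 * k)]
    rw [hmid]
    rw [if_neg (by omega : ¬ (2 * k + 1 ≤ 2 * k)), if_pos rfl,
      if_neg (by omega : ¬ (2 * k + 1 + 1 ≤ 2 * k)),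
      if_neg (by omega : ¬ (2 * k + 1 = 2 * k)),
      if_neg (by omega : ¬ (2 * k + 1 + 1 = 2 * k)),
      if_neg (by omega : ¬ (2 * k + 1 + 1 = 2 * k + 1)),
      if_pos (rfl : 2 * k + 1 = 2 * k + 1)]
    have : i ≤ 2 * k - 1 ∨ i = 2 * k ∨ i = 2 * k + 1 ∨ i = 2 * k + 2 := by omega
    rcases this with h | h | h | h
    · rw [hc1 i hi1 h, if_pos (Finset.mem_Icc.mpr ⟨hi1, h⟩)]
      split_ifs <;> omega
    · subst h
      rw [hc2, if_neg (by rw [Finset.mem_Icc]; omega)]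
      split_ifs <;> omega
    · subst h
      rw [hc3, if_neg (by rw [Finset.mem_Icc]; omega)]
      split_ifs <;> omega
    · subst h
      rw [hc4, if_neg (by rw [Finset.mem_Icc]; omega)]
      split_ifs <;> omega
  · -- proper
    intro q hq1 hq2
    unfold TB
    split_ifs <;> omega
  · -- uniqueness
    intro T' hT'
    have hge' := entry_ge l k p (2 * k + 2) c T' hpl hT'
    have hforced := forced l k p (2 * k + 2) c T' hl hpl hT' (2 * k - 1) (by omega)
      (by omega) hc1
    obtain ⟨hent, hrowm, hcol, hcount⟩ := hT'
    have hrho20 : rhoRow l k p (2 * k) = l := by unfold rhoRow; rw [if_pos (by omega)]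
    have hrho21 : rhoRow l k p (2 * k + 1) = p := by unfold rhoRow; rw [if_neg (by omega)]
    have hrho22 : rhoRow l k p (2 * k + 2) = p := by unfold rhoRow; rw [if_neg (by omega)]
    have hrow22 : ∀ b1 : ℕ, 1 ≤ b1 → b1 ≤ p → T' (2 * k + 2) b1 = 2 * k + 2 := by
      intro b1 h1 h2
      have hgeq := hge' (2 * k + 2) b1 (by omega) (by omega) h1 (by rw [hrho22]; exact h2)
      have hub2 := (hent (2 * k + 2) (Finset.mem_Icc.mpr ⟨by omega, le_rfl⟩) b1
        (Finset.mem_Icc.mpr ⟨h1, by rw [hrho22]; exact h2⟩)).2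
      omega
    have hrow21 : ∀ b1 : ℕ, 1 ≤ b1 → b1 ≤ p → T' (2 * k + 1) b1 = 2 * k + 1 := by
      intro b1 h1 h2
      have hgeq := hge' (2 * k + 1) b1 (by omega) (by omega) h1 (by rw [hrho21]; exact h2)
      have hlt : T' (2 * k + 1) b1 < T' (2 * k + 2) b1 := hcol (2 * k + 1) (by omega)
        (by omega) b1 h1 (by rw [hrho21]; exact h2) (by rw [hrho22]; exact h2)
      have := hrow22 b1 h1 h2
      omega
    have hvals3 : ∀ b1 : ℕ, 1 ≤ b1 → b1 ≤ l →
        T' (2 * k) b1 = 2 * k ∨ T' (2 * k) b1 = 2 * k + 1 ∨ T' (2 * k) b1 = 2 * k + 2 := by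
      intro b1 h1 h2
      have hgeq := hge' (2 * k) b1 (by omega) (by omega) h1 (by rw [hrho20]; exact h2)
      have hub2 := (hent (2 * k) (Finset.mem_Icc.mpr ⟨by omega, by omega⟩) b1
        (Finset.mem_Icc.mpr ⟨h1, by rw [hrho20]; exact h2⟩)).2
      omega
    -- count of value 2k sits in row 2k
    have hcnt1 := hcount (2 * k) (by omega) (by omega)
    rw [hc2, card_filter_product] at hcnt1
    rw [Finset.sum_eq_single_of_mem (2 * k) (Finset.mem_Icc.mpr ⟨by omega, by omega⟩)
      (fun q hq hne => by
        dsimp only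
        rw [Finset.card_eq_zero, Finset.filter_eq_empty_iff]
        intro b1 hb1
        rw [Finset.mem_Icc] at hb1 hq
        rintro ⟨hbr, hTeq⟩
        rcases Nat.lt_or_ge q (2 * k) with h | h
        · have := hforced q hq.1 (by omega) b1 hb1.1 hb1.2
          omega
        · rcases Nat.lt_or_ge q (2 * k + 2) with h' | h'
          · have hq21 : q = 2 * k + 1 := by omega
            subst hq21
            rw [hrho21] at hbr
            have := hrow21 b1 hb1.1 hbr
            omega
          · have hq22 : q = 2 * k + 2 := by omega
            subst hq22
            rw [hrho22] at hbr
            have := hrow22 b1 hb1.1 hbr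
            omega)] at hcnt1
    dsimp only at hcnt1
    have hset1 : (Finset.Icc 1 l).filter
        (fun b1 => b1 ≤ rhoRow l k p (2 * k) ∧ T' (2 * k) b1 = 2 * k)
        = (Finset.Icc 1 l).filter (fun b1 => T' (2 * k) b1 = 2 * k) := by
      ext b1
      simp only [Finset.mem_filter, Finset.mem_Icc, hrho20]
      constructor
      · rintro ⟨⟨u1, u2⟩, u3, u4⟩
        exact ⟨⟨u1, u2⟩, u4⟩
      · rintro ⟨⟨u1, u2⟩, u4⟩
        exact ⟨⟨u1, u2⟩, u2, u4⟩
    rw [hset1] at hcnt1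
    -- count of value 2k+2 : rows 2k and 2k+2 contribute
    have hcnt3 := hcount (2 * k + 2) (by omega) (by omega)
    rw [hc4, card_filter_product] at hcnt3
    rw [sum_split (2 * k + 2) (2 * k - 1) (by omega),
      show (2 * k - 1) + 1 = 2 * k by omega,
      show (2 * k + 2) = (2 * k + 1) + 1 by omega,
      Finset.sum_Icc_succ_top (show 2 * k ≤ 2 * k + 1 + 1 by omega),
      Finset.sum_Icc_succ_top (show 2 * k ≤ 2 * k + 1 by omega),
      Finset.Icc_self, Finset.sum_singleton,
      show (2 * k + 1) + 1 = 2 * k + 2 by omega] at hcnt3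
    dsimp only at hcnt3
    have hz1 : ∑ q ∈ Finset.Icc 1 (2 * k - 1),
        ((Finset.Icc 1 l).filter
          (fun b1 => b1 ≤ rhoRow l k p q ∧ T' q b1 = 2 * k + 2)).card = 0 := by
      refine Finset.sum_eq_zero (fun q hq => ?_)
      rw [Finset.mem_Icc] at hq
      rw [Finset.card_eq_zero, Finset.filter_eq_empty_iff]
      intro b1 hb1
      rw [Finset.mem_Icc] at hb1
      rintro ⟨hbr, hTeq⟩
      have := hforced q hq.1 hq.2 b1 hb1.1 hb1.2
      omega
    have hz2 : ((Finset.Icc 1 l).filter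
        (fun b1 => b1 ≤ rhoRow l k p (2 * k + 1) ∧ T' (2 * k + 1) b1 = 2 * k + 2)).card
        = 0 := by
      rw [Finset.card_eq_zero, Finset.filter_eq_empty_iff]
      intro b1 hb1
      rw [Finset.mem_Icc] at hb1
      rintro ⟨hbr, hTeq⟩
      rw [hrho21] at hbr
      have := hrow21 b1 hb1.1 hbr
      omega
    have hz3 : ((Finset.Icc 1 l).filter
        (fun b1 => b1 ≤ rhoRow l k p (2 * k + 2) ∧ T' (2 * k + 2) b1 = 2 * k + 2)).card
        = p := by
      rw [filter_Icc_eq l 1 p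
        (fun b1 => b1 ≤ rhoRow l k p (2 * k + 2) ∧ T' (2 * k + 2) b1 = 2 * k + 2)
        le_rfl hpl (fun b1 hb1 hbl => by
          rw [hrho22]
          constructor
          · rintro ⟨u1, u2⟩
            exact ⟨hb1, u1⟩
          · rintro ⟨u1, u2⟩
            exact ⟨u2, hrow22 b1 hb1 u2⟩)]
      all_goals omega
    rw [hz1, hz2, hz3] at hcnt3
    have hset3 : (Finset.Icc 1 l).filter
        (fun b1 => b1 ≤ rhoRow l k p (2 * k) ∧ T' (2 * k) b1 = 2 * k + 2)
        = (Finset.Icc 1 l).filter (fun b1 => T' (2 * k) b1 = 2 * k + 2) := by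
      ext b1
      simp only [Finset.mem_filter, Finset.mem_Icc, hrho20]
      constructor
      · rintro ⟨⟨u1, u2⟩, u3, u4⟩
        exact ⟨⟨u1, u2⟩, u4⟩
      · rintro ⟨⟨u1, u2⟩, u4⟩
        exact ⟨⟨u1, u2⟩, u2, u4⟩
    rw [hset3] at hcnt3
    have hD : ((Finset.Icc 1 l).filter (fun b1 => T' (2 * k) b1 = 2 * k + 2)).card
        = d - p := by omega
    have hrow20 : ∀ j : ℕ, 1 ≤ j → j ≤ l →
        T' (2 * k) j = if j ≤ a then 2 * k
          else if j ≤ l - (d - p) then 2 * k + 1 else 2 * k + 2 :=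
      three_val l a (d - p) (2 * k) (2 * k + 1) (2 * k + 2) (by omega) (by omega) _
        (fun i' j h1 h2 h3 => hrowm (2 * k) (Finset.mem_Icc.mpr ⟨by omega, by omega⟩)
          i' j h1 h2 (by rw [hrho20]; exact h3))
        hvals3 hcnt1 hD
    -- conclude
    intro a1 ha1 b1 hb1
    rw [Finset.mem_Icc] at ha1 hb1
    rcases Nat.lt_or_ge a1 (2 * k) with h | h
    · have hr : rhoRow l k p a1 = l := by unfold rhoRow; rw [if_pos (by omega)]
      rw [hr] at hb1
      rw [hforced a1 ha1.1 (by omega) b1 hb1.1 hb1.2]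
      unfold TB
      split_ifs <;> omega
    · rcases Nat.lt_or_ge a1 (2 * k + 1) with h' | h'
      · have ha20 : a1 = 2 * k := by omega
        subst ha20
        rw [hrho20] at hb1
        rw [hrow20 b1 hb1.1 hb1.2]
        unfold TB
        split_ifs <;> omega
      · rcases Nat.lt_or_ge a1 (2 * k + 2) with h'' | h''
        · have ha21 : a1 = 2 * k + 1 := by omega
          subst ha21
          rw [hrho21] at hb1
          rw [hrow21 b1 hb1.1 hb1.2]
          unfold TB
          split_ifs <;> omega
        · have ha22 : a1 = 2 * k + 2 := by omega
          subst ha22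
          rw [hrho22] at hb1
          rw [hrow22 b1 hb1.1 hb1.2]
          unfold TB
          split_ifs <;> omega

end Stmt3Aux

/-- If `Λ > p` and the content is `ℓ`-maximal, there is exactly one semistandard
Young tableau of shape `ϱ = (ℓ^{2k}, p, p)` with content `μ`, and it is proper. -/
theorem stmt3 (l k p n : ℕ) (c : ℕ → ℕ)
    (hl : 1 ≤ l) (hp : 1 ≤ p) (hpl : p ≤ l)
    (hbd : ∀ i : ℕ, 1 ≤ i → i ≤ n → c i ≤ l)
    (hmono : ∀ i j : ℕ, 1 ≤ i → i ≤ j → j ≤ n → c j ≤ c i)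
    (hsum : ∑ i ∈ Finset.Icc 1 n, c i = 2 * (k * l + p))
    (hlam : p < ∑ i ∈ Finset.Icc (2 * k + 2) n, c i)
    (hmax : IsMaximal l n c) :
    ∃ T : ℕ → ℕ → ℕ, IsRhoSSYT l k p n c T ∧ IsProper l k T ∧
      ∀ T' : ℕ → ℕ → ℕ, IsRhoSSYT l k p n c T' →
        EqOnShape (2 * k + 2) (rhoRow l k p) T' T := by
  classical
  set m := ((Finset.Icc 1 n).filter (fun i => c i = l)).card with hmdef
  have hfilter : (Finset.Icc 1 n).filter (fun i => c i = l) = Finset.Icc 1 m := by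
    refine Stmt3Aux.downset n m _ (Finset.filter_subset _ _) ?_ rfl
    intro i j h1 hij hj
    rw [Finset.mem_filter, Finset.mem_Icc] at hj
    rw [Finset.mem_filter, Finset.mem_Icc]
    have hcj := hmono i j h1 hij hj.1.2
    have hbi := hbd i h1 (le_trans hij hj.1.2)
    exact ⟨⟨h1, le_trans hij hj.1.2⟩, by omega⟩
  have hmn : m ≤ n := by
    have := Finset.card_le_card (Finset.filter_subset (fun i => c i = l) (Finset.Icc 1 n))
    rw [← hmdef, Nat.card_Icc] at this
    omega
  have hceq : ∀ i : ℕ, 1 ≤ i → i ≤ m → c i = l := by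
    intro i h1 h2
    have hmem : i ∈ Finset.Icc 1 m := Finset.mem_Icc.mpr ⟨h1, h2⟩
    rw [← hfilter] at hmem
    exact (Finset.mem_filter.mp hmem).2
  have hclt : ∀ i : ℕ, m < i → i ≤ n → c i < l := by
    intro i h1 h2
    have hmem : i ∉ Finset.Icc 1 m := by rw [Finset.mem_Icc]; omega
    rw [← hfilter] at hmem
    have hne : ¬ (c i = l) := fun h =>
      hmem (Finset.mem_filter.mpr ⟨Finset.mem_Icc.mpr ⟨by omega, h2⟩, h⟩)
    have := hbd i (by omega) h2
    omega
  have hm3 : n ≤ m + 3 := by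
    have h := hmax
    unfold IsMaximal at h
    rw [← hmdef] at h
    omega
  have hn2k : 2 * k + 2 ≤ n := by
    by_contra hcon
    have he : Finset.Icc (2 * k + 2) n = ∅ := Finset.Icc_eq_empty (by omega)
    rw [he, Finset.sum_empty] at hlam
    omega
  have hsum1 : ∀ j : ℕ, j ≤ m → ∑ i ∈ Finset.Icc 1 j, c i = j * l := by
    intro j hj
    rw [Finset.sum_congr rfl (fun i hi =>
      hceq i (Finset.mem_Icc.mp hi).1 (le_trans (Finset.mem_Icc.mp hi).2 hj))]
    rw [Finset.sum_const, Nat.card_Icc, smul_eq_mul, Nat.add_sub_cancel]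
  have hm2k : m ≤ 2 * k := by
    by_contra hcon
    push_neg at hcon
    have e1 : ∑ i ∈ Finset.Icc 1 (2 * k + 1), c i = (2 * k + 1) * l :=
      hsum1 (2 * k + 1) (by omega)
    have e2 := Stmt3Aux.sum_split n (2 * k + 1) (by omega) c
    rw [hsum, e1] at e2
    have e3 : (2 * k + 1) * l = 2 * (k * l) + l := by ring
    have e4 : 2 * (k * l + p) = 2 * (k * l) + 2 * p := by ring
    rw [e3, e4, show 2 * k + 1 + 1 = 2 * k + 2 from rfl] at e2
    omega
  by_cases hcase : m = 2 * k
  · -- case A : m = 2k, n = 2k+3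
    have hn : n = 2 * k + 3 := by
      rcases Nat.lt_or_ge n (2 * k + 3) with h | h
      · exfalso
        have hn2 : n = 2 * k + 2 := by omega
        subst hn2
        rw [Finset.Icc_self, Finset.sum_singleton] at hlam
        have e0 : ∑ i ∈ Finset.Icc 1 (2 * k), c i = 2 * k * l :=
          hsum1 (2 * k) (by omega)
        have e2 := Stmt3Aux.sum_split (2 * k + 2) (2 * k) (by omega) c
        rw [hsum, e0] at e2
        rw [show (2 * k + 2) = (2 * k + 1) + 1 by omega,
          Finset.sum_Icc_succ_top (show 2 * k + 1 ≤ 2 * k + 1 + 1 by omega),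
          Finset.Icc_self, Finset.sum_singleton] at e2
        have e4 : 2 * (k * l + p) = 2 * k * l + 2 * p := by ring
        rw [e4, show 2 * k + 1 + 1 = 2 * k + 2 from rfl] at e2
        have hm1 := hmono (2 * k + 1) (2 * k + 2) (by omega) (by omega) (by omega)
        omega
      · omega
    subst hn
    have habd0 : c (2 * k + 1) + c (2 * k + 2) + c (2 * k + 3) = 2 * p := by
      have e0 : ∑ i ∈ Finset.Icc 1 (2 * k), c i = 2 * k * l := hsum1 (2 * k) (by omega)
      have e2 := Stmt3Aux.sum_split (2 * k + 3) (2 * k) (by omega) c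
      rw [hsum, e0] at e2
      rw [show (2 * k + 3) = (2 * k + 2) + 1 by omega,
        Finset.sum_Icc_succ_top (show 2 * k + 1 ≤ 2 * k + 2 + 1 by omega),
        Finset.sum_Icc_succ_top (show 2 * k + 1 ≤ 2 * k + 2 by omega),
        Finset.Icc_self, Finset.sum_singleton] at e2
      have e4 : 2 * (k * l + p) = 2 * k * l + 2 * p := by ring
      rw [e4, show 2 * k + 1 + 1 = 2 * k + 2 from rfl,
        show 2 * k + 2 + 1 = 2 * k + 3 from rfl] at e2
      omega
    have hlam' : p < c (2 * k + 2) + c (2 * k + 3) := by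
      rw [show (2 * k + 3) = (2 * k + 2) + 1 by omega,
        Finset.sum_Icc_succ_top (show 2 * k + 2 ≤ 2 * k + 2 + 1 by omega),
        Finset.Icc_self, Finset.sum_singleton] at hlam
      rw [show 2 * k + 2 + 1 = 2 * k + 3 from rfl] at hlam
      omega
    have hba := hmono (2 * k + 1) (2 * k + 2) (by omega) (by omega) (by omega)
    have hdb := hmono (2 * k + 2) (2 * k + 3) (by omega) (by omega) (by omega)
    exact Stmt3Aux.existsA l k p (c (2 * k + 1)) (c (2 * k + 2)) (c (2 * k + 3)) c
      hl hp hpl hba hdb (by omega) (by omega)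
      (fun i h1 h2 => hceq i h1 (by omega)) rfl rfl rfl
  · -- case B : m + 1 = 2k, n = 2k+2
    have hm1 : m + 1 = 2 * k := by omega
    have hk : 1 ≤ k := by omega
    have hn : n = 2 * k + 2 := by omega
    subst hn
    rw [Finset.Icc_self, Finset.sum_singleton] at hlam
    have habd0 : c (2 * k) + c (2 * k + 1) + c (2 * k + 2) = l + 2 * p := by
      have e0 : ∑ i ∈ Finset.Icc 1 m, c i = m * l := hsum1 m le_rfl
      have e2 := Stmt3Aux.sum_split (2 * k + 2) m (by omega) c
      rw [hsum, e0, hm1] at e2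
      rw [show (2 * k + 2) = (2 * k + 1) + 1 by omega,
        Finset.sum_Icc_succ_top (show 2 * k ≤ 2 * k + 1 + 1 by omega),
        Finset.sum_Icc_succ_top (show 2 * k ≤ 2 * k + 1 by omega),
        Finset.Icc_self, Finset.sum_singleton] at e2
      rw [show 2 * k + 1 + 1 = 2 * k + 2 from rfl] at e2
      have e3 : 2 * (k * l) = m * l + l := by
        calc 2 * (k * l) = (2 * k) * l := by ring
          _ = (m + 1) * l := by rw [hm1]
          _ = m * l + l := by ring
      have e4 : 2 * (k * l + p) = 2 * (k * l) + 2 * p := by ring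
      rw [e4, e3] at e2
      omega
    have hba := hmono (2 * k) (2 * k + 1) (by omega) (by omega) (by omega)
    have hdb := hmono (2 * k + 1) (2 * k + 2) (by omega) (by omega) (by omega)
    have hal : c (2 * k) < l := hclt (2 * k) (by omega) (by omega)
    exact Stmt3Aux.existsB l k p (c (2 * k)) (c (2 * k + 1)) (c (2 * k + 2)) c
      hl hp hpl hba hdb (by omega) hal habd0 hk
      (fun i h1 h2 => hceq i h1 (by omega)) rfl rfl rfl
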